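/- arXiv:0810.2725 — 9 statements merged into one kernel-verified Lean document; each statement's English description precedes it below -/
import Mathlib

section
/- Let K be a field of characteristic p > 0, let θ : K → K be a Tits endomorphism, and let ν be a nontrivial θ-invariant valuation of K. Then the value group ν(K \ {0}) is a dense additive subgroup of ℝ; in particular ν is not a discrete valuation (its value group is not cyclic). -/
/-- Multiplication of an extended real (in `WithTop ℝ`) by a real scalar,
with the convention `c · ∞ = ∞`. -/
noncomputable def smulTop (c : ℝ) (x : WithTop ℝ) : WithTop ℝ :=
  WithTop.map (fun y => c * y) x

/-- If `K` is a field of characteristic `p > 0`, `θ` a Tits endomorphism of `K`,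
and `ν` a nontrivial `θ`-invariant valuation of `K`, then the value group
`ν(K \ {0})` is a dense additive subgroup of `ℝ`; in particular it is not cyclic
(so `ν` is not discrete). -/
theorem stmt_1 {K : Type*} [Field K] (p : ℕ) (hp : 0 < p) [CharP K p]
    (θ : K →+* K) (hθ : ∀ x : K, θ (θ x) = x ^ p)
    (ν : K → WithTop ℝ)
    (hν0 : ∀ x : K, ν x = ⊤ ↔ x = 0)
    (hmul : ∀ x y : K, ν (x * y) = ν x + ν y)
    (hadd : ∀ x y : K, min (ν x) (ν y) ≤ ν (x + y))
    (hnt : ∃ x : K, x ≠ 0 ∧ ν x ≠ 0)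
    (hinv : ∀ x : K, x ≠ 0 → ν (θ x) = smulTop (Real.sqrt p) (ν x)) :
    (∃ G : AddSubgroup ℝ,
        (G : Set ℝ) = {r : ℝ | ∃ x : K, x ≠ 0 ∧ ν x = (r : WithTop ℝ)}) ∧
    Dense {r : ℝ | ∃ x : K, x ≠ 0 ∧ ν x = (r : WithTop ℝ)} ∧
    ¬ ∃ a : ℝ, {r : ℝ | ∃ x : K, x ≠ 0 ∧ ν x = (r : WithTop ℝ)}
        = (AddSubgroup.zmultiples a : Set ℝ) := by
  have hprime : p.Prime := Or.resolve_right (CharP.char_is_prime_or_zero K p) hp.ne'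
  set S : Set ℝ := {r : ℝ | ∃ x : K, x ≠ 0 ∧ ν x = (r : WithTop ℝ)} with hS
  -- finite values for nonzero elements
  have hfin : ∀ x : K, x ≠ 0 → ∃ r : ℝ, ν x = (r : WithTop ℝ) := by
    intro x hx
    rcases WithTop.ne_top_iff_exists.mp (fun h => hx ((hν0 x).mp h)) with ⟨r, hr⟩
    exact ⟨r, hr.symm⟩
  -- ν 1 = 0
  have hone : ν 1 = (0 : ℝ) := by
    rcases hfin 1 one_ne_zero with ⟨r, hr⟩
    have := hmul 1 1
    rw [one_mul, hr] at this
    have : (r : WithTop ℝ) = (r : WithTop ℝ) + (r : WithTop ℝ) := this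
    rw [← WithTop.coe_add] at this
    have hr0 : r = r + r := WithTop.coe_injective this
    have : r = 0 := by linarith
    rw [hr, this]
  have hzero : (0 : ℝ) ∈ S := ⟨1, one_ne_zero, hone⟩
  have haddmem : ∀ r s : ℝ, r ∈ S → s ∈ S → r + s ∈ S := by
    rintro r s ⟨x, hx, hxr⟩ ⟨y, hy, hys⟩
    exact ⟨x * y, mul_ne_zero hx hy, by rw [hmul, hxr, hys, ← WithTop.coe_add]⟩
  have hnegmem : ∀ r : ℝ, r ∈ S → -r ∈ S := by
    rintro r ⟨x, hx, hxr⟩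
    refine ⟨x⁻¹, inv_ne_zero hx, ?_⟩
    rcases hfin x⁻¹ (inv_ne_zero hx) with ⟨s, hs⟩
    have := hmul x x⁻¹
    rw [mul_inv_cancel₀ hx, hone, hxr, hs, ← WithTop.coe_add] at this
    have : (0 : ℝ) = r + s := WithTop.coe_injective this
    have : s = -r := by linarith
    rw [hs, this]
  have hG : ∃ G : AddSubgroup ℝ, (G : Set ℝ) = S :=
    ⟨{ carrier := S, add_mem' := fun ha hb => haddmem _ _ ha hb,
       zero_mem' := hzero, neg_mem' := fun ha => hnegmem _ ha }, rfl⟩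
  obtain ⟨G, hGS⟩ := hG
  -- √p invariance
  have hsqrt : ∀ r : ℝ, r ∈ S → Real.sqrt p * r ∈ S := by
    rintro r ⟨x, hx, hxr⟩
    refine ⟨θ x, fun h => hx (map_eq_zero_iff θ θ.injective |>.mp h), ?_⟩
    rw [hinv x hx, hxr]
    rfl
  -- a nonzero element of S
  obtain ⟨x₀, hx₀, hx₀0⟩ := hnt
  obtain ⟨r₀, hr₀⟩ := hfin x₀ hx₀
  have hr₀0 : r₀ ≠ 0 := by
    intro h; exact hx₀0 (by rw [hr₀, h]; rfl)
  have hr₀S : r₀ ∈ S := ⟨x₀, hx₀, hr₀⟩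
  -- not cyclic
  have hnc : ¬ ∃ a : ℝ, S = (AddSubgroup.zmultiples a : Set ℝ) := by
    rintro ⟨a, ha⟩
    have ha0 : a ≠ 0 := by
      rintro rfl
      have := hr₀S
      rw [ha] at this
      rcases AddSubgroup.mem_zmultiples_iff.mp this with ⟨k, hk⟩
      simp at hk
      exact hr₀0 hk.symm
    have haS : a ∈ S := by rw [ha]; exact AddSubgroup.mem_zmultiples a
    have := hsqrt a haS
    rw [ha] at this
    rcases AddSubgroup.mem_zmultiples_iff.mp this with ⟨n, hn⟩
    have hsq : Real.sqrt p = (n : ℝ) := by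
      have : (n : ℝ) * a = Real.sqrt p * a := by rw [← hn]; simp [zsmul_eq_mul]
      field_simp at this
      linarith
    have hpn : (p : ℝ) = (n : ℝ) ^ 2 := by
      rw [← hsq, Real.sq_sqrt (by positivity)]
    have hn0 : 0 ≤ n := by
      have : (0 : ℝ) ≤ (n : ℝ) := hsq ▸ Real.sqrt_nonneg _
      exact_mod_cast this
    lift n to ℕ using hn0 with m
    have hpm : p = m ^ 2 := by exact_mod_cast hpn
    have hdvd : m ∣ p := hpm ▸ dvd_pow_self m (by norm_num)
    rcases (Nat.Prime.eq_one_or_self_of_dvd hprime m hdvd) with h1 | h1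
    · rw [h1, one_pow] at hpm; exact absurd hpm hprime.one_lt.ne'
    · rw [h1] at hpm; nlinarith [hprime.two_le]
  refine ⟨⟨G, hGS⟩, ?_, hnc⟩
  rcases G.dense_or_cyclic with hd | ⟨a, hcyc⟩
  · rwa [hGS] at hd
  · exfalso
    exact hnc ⟨a, by rw [← hGS, hcyc, AddSubgroup.zmultiples_eq_closure]⟩
end

section
/- Let K be a field of characteristic 3 with a Tits endomorphism θ. Then the set T = K × K × K with the operation (r,s,t)·(w,u,v) = (r+w, s+u+θ(r)w, t+v−ru+sw−r^{θ+1}w) is a group with identity (0,0,0), and the inverse of (r,s,t) is (−r, −s+r^{θ+1}, −t). -/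
/-- The multiplication
`(r,s,t)·(w,u,v) = (r+w, s+u+θ(r)w, t+v−ru+sw−r^{θ+1}w)` on `T = K × K × K`. -/
def Tmul {K : Type*} [Field K] (θ : K →+* K) (a b : K × K × K) : K × K × K :=
  (a.1 + b.1, a.2.1 + b.2.1 + θ a.1 * b.1,
    a.2.2 + b.2.2 - a.1 * b.2.1 + a.2.1 * b.1 - θ a.1 * a.1 * b.1)

/-- Let `K` be a field of characteristic 3 with a Tits endomorphism `θ`.
Then `T = K × K × K` with the operation
`(r,s,t)·(w,u,v) = (r+w, s+u+θ(r)w, t+v−ru+sw−r^{θ+1}w)` is a group with identity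
`(0,0,0)`, and the inverse of `(r,s,t)` is `(−r, −s+r^{θ+1}, −t)`. -/
theorem stmt_4 {K : Type*} [Field K] [CharP K 3]
    (θ : K →+* K) (hθ : ∀ x : K, θ (θ x) = x ^ 3) :
    (∀ a b c : K × K × K, Tmul θ (Tmul θ a b) c = Tmul θ a (Tmul θ b c)) ∧
    (∀ a : K × K × K, Tmul θ ((0, 0, 0) : K × K × K) a = a) ∧
    (∀ a : K × K × K, Tmul θ a ((0, 0, 0) : K × K × K) = a) ∧
    (∀ r s t : K,
      Tmul θ (r, s, t) (-r, -s + θ r * r, -t) = ((0, 0, 0) : K × K × K)) ∧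
    (∀ r s t : K,
      Tmul θ (-r, -s + θ r * r, -t) (r, s, t) = ((0, 0, 0) : K × K × K)) := by
  refine ⟨?_, ?_, ?_, ?_, ?_⟩ <;> intros <;>
    simp only [Tmul, Prod.mk.injEq, Prod.ext_iff, map_add, map_zero, map_neg] <;>
    refine ⟨by ring, by ring, by ring⟩
end

section
/- Let K be a field of characteristic 3 with a Tits endomorphism θ. The center of the group T = K × K × K with operation (r,s,t)·(w,u,v) = (r+w, s+u+θ(r)w, t+v−ru+sw−r^{θ+1}w) is exactly the set {(0,0,t) : t ∈ K}, and this center is isomorphic to the additive group of K. -/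
lemma center_eq {K : Type*} [Field K] [CharP K 3] (θ : K →+* K) :
    {a : K × K × K | ∀ b : K × K × K, Tmul θ a b = Tmul θ b a}
      = {a : K × K × K | ∃ t : K, a = (0, 0, t)} := by
  have h3 : (3 : K) = 0 := CharP.cast_eq_zero K 3
  ext ⟨r, s, t⟩
  simp only [Set.mem_setOf_eq]
  constructor
  · intro h
    have h1 := h (0, 1, 0)
    have h2 := h (1, 0, 0)
    simp only [Tmul, Prod.mk.injEq] at h1 h2
    have hr : r = 0 := by
      have e := h1.2.2
      have hh : (2 : K) * r = 0 := by linear_combination -e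
      have h2ne : (2 : K) ≠ 0 := by
        intro hc
        have : (1 : K) = 0 := by linear_combination h3 - hc
        exact one_ne_zero this
      exact (mul_eq_zero.mp hh).resolve_left h2ne
    subst hr
    have hs : s = 0 := by
      have e := h2.2.2
      simp only [map_zero, zero_mul, mul_zero, mul_one, one_mul, zero_add, add_zero,
        sub_zero, zero_sub] at e
      have hh : (2 : K) * s = 0 := by linear_combination e
      have h2ne : (2 : K) ≠ 0 := by
        intro hc
        have : (1 : K) = 0 := by linear_combination h3 - hc
        exact one_ne_zero this
      exact (mul_eq_zero.mp hh).resolve_left h2ne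
    exact ⟨t, by simp [hs]⟩
  · rintro ⟨t', ht⟩ b
    obtain ⟨rfl, rfl, rfl⟩ : r = 0 ∧ s = 0 ∧ t = t' := by
      simpa [Prod.ext_iff] using ht
    simp only [Tmul, Prod.mk.injEq, map_zero]
    refine ⟨by ring, by ring, by ring⟩

/-- Let `K` be a field of characteristic 3 with a Tits endomorphism `θ`.
The center of the group `T = K × K × K` is exactly `{(0,0,t) : t ∈ K}`, and this
center is isomorphic to the additive group of `K`. -/
theorem stmt_5 {K : Type*} [Field K] [CharP K 3]
    (θ : K →+* K) (hθ : ∀ x : K, θ (θ x) = x ^ 3) :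
    {a : K × K × K | ∀ b : K × K × K, Tmul θ a b = Tmul θ b a}
      = {a : K × K × K | ∃ t : K, a = (0, 0, t)} ∧
    ∃ f : K → K × K × K, Function.Injective f ∧
      Set.range f = {a : K × K × K | ∀ b : K × K × K, Tmul θ a b = Tmul θ b a} ∧
      ∀ x y : K, Tmul θ (f x) (f y) = f (x + y) := by
  refine ⟨center_eq θ, fun t => (0, 0, t), ?_, ?_, ?_⟩
  · intro x y hxy
    simpa [Prod.ext_iff] using hxy
  · rw [center_eq θ]
    ext a
    simp [Set.range, eq_comm]
  · intro x y
    simp [Tmul]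
end

section
/- Let K be a field of characteristic 2 with a Tits endomorphism θ. The norm R(s,t) = s^{θ+2} + st + θ(t) is anisotropic: if R(s,t) = 0 for s, t ∈ K, then s = 0 and t = 0. -/
/-- The norm `R(s,t) = s^{θ+2} + st + θ(t)` of the group `S = K × K`. -/
def Rnorm {K : Type*} [Field K] (θ : K →+* K) (s t : K) : K :=
  θ s * s ^ 2 + s * t + θ t

/-- Let `K` be a field of characteristic 2 with a Tits endomorphism `θ`.
The norm `R(s,t) = s^{θ+2} + st + θ(t)` is anisotropic: if `R(s,t) = 0`
then `s = 0` and `t = 0`. -/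
theorem stmt_6 {K : Type*} [Field K] [CharP K 2]
    (θ : K →+* K) (hθ : ∀ x : K, θ (θ x) = x ^ 2)
    (s t : K) (h : Rnorm θ s t = 0) :
    s = 0 ∧ t = 0 := by
  have h2 : (2 : K) = 0 := by exact_mod_cast CharP.cast_eq_zero K 2
  unfold Rnorm at h
  by_cases hs : s = 0
  · subst hs
    simp at h
    exact ⟨rfl, θ.injective (by simpa using h)⟩
  · exfalso
    have ht : θ t = θ s * s ^ 2 + s * t := by
      linear_combination h - (θ s * s ^ 2 + s * t) * h2
    have key : t ^ 2 = θ s * s * t := by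
      have h3 := congrArg θ ht
      rw [map_add, map_mul, map_mul, map_pow, hθ, hθ, ht] at h3
      linear_combination h3 + (s ^ 2 * θ s ^ 2) * h2
    by_cases ht0 : t = 0
    · subst ht0
      simp at ht
      exact hs ht
    · have hts : t = θ s * s := by
        rcases mul_eq_zero.mp (show (t - θ s * s) * t = 0 by linear_combination key) with h' | h'
        · exact sub_eq_zero.mp h'
        · exact absurd h' ht0
      have : θ t = 0 := by
        rw [ht, hts]; ring_nf; linear_combination (s ^ 2 * θ s) * h2
      exact ht0 (θ.injective (by simpa using this))
end

section
/- Let K be a field of characteristic 3 with a Tits endomorphism θ. The norm N(r,s,t) = r^{θ+1}θ(s) − rθ(t) − r^{θ+3}s − r²s² + s^{θ+1} + t² − r^{2θ+4} is anisotropic: if N(r,s,t) = 0 for r, s, t ∈ K, then r = s = t = 0. -/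
/-- The norm
`N(r,s,t) = r^{θ+1}θ(s) − rθ(t) − r^{θ+3}s − r²s² + s^{θ+1} + t² − r^{2θ+4}`
of the group `T = K × K × K`. -/
def Nnorm {K : Type*} [Field K] (θ : K →+* K) (r s t : K) : K :=
  θ r * r * θ s - r * θ t - θ r * r ^ 3 * s - r ^ 2 * s ^ 2
    + θ s * s + t ^ 2 - θ r ^ 2 * r ^ 4

/-- Let `K` be a field of characteristic 3 with a Tits endomorphism `θ`.
The norm `N` is anisotropic: if `N(r,s,t) = 0` then `r = s = t = 0`. -/
theorem stmt_7 {K : Type*} [Field K] [CharP K 3]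
    (θ : K →+* K) (hθ : ∀ x : K, θ (θ x) = x ^ 3)
    (r s t : K) (h : Nnorm θ r s t = 0) :
    r = 0 ∧ s = 0 ∧ t = 0 := by
  have h3 : (3 : K) = 0 := by exact_mod_cast CharP.cast_eq_zero K 3
  have hθinj : Function.Injective θ := θ.injective
  by_cases hr : r = 0
  · -- case r = 0
    subst hr
    have hN : θ 0 * 0 * θ s - 0 * θ t - θ 0 * 0 ^ 3 * s - 0 ^ 2 * s ^ 2
        + θ s * s + t ^ 2 - θ 0 ^ 2 * 0 ^ 4 = 0 := h
    rw [map_zero] at hN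
    have h0 : θ s * s + t ^ 2 = 0 := by linear_combination hN
    have h1 : s ^ 3 * θ s + θ t ^ 2 = 0 := by
      have h' := congrArg θ h0
      simp only [map_add, map_mul, map_pow, map_zero, hθ] at h'
      linear_combination h'
    have hsplit : s * (θ t - s * t) * (θ t + s * t) = 0 := by
      linear_combination s * h1 - s ^ 3 * h0
    have finishr0 : t ^ 3 + t ^ 3 = 0 → s = 0 ∧ t = 0 := by
      intro h2
      have h2' : (2 : K) * t ^ 3 = 0 := by linear_combination h2
      have ht3 : t ^ 3 = 0 := by
        rcases mul_eq_zero.mp h2' with h'' | h''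
        · exact absurd (show (1:K) = 0 by linear_combination h3 - h'') one_ne_zero
        · exact h''
      have ht : t = 0 := pow_eq_zero_iff (by norm_num) |>.mp ht3
      have hss : θ s * s = 0 := by linear_combination h0 - t * ht
      have hs : s = 0 := by
        rcases mul_eq_zero.mp hss with h'' | h''
        · exact hθinj (by rw [h'', map_zero])
        · exact h''
      exact ⟨hs, ht⟩
    rcases mul_eq_zero.mp hsplit with h' | hc
    · rcases mul_eq_zero.mp h' with hs0 | hc
      · have ht2 : t ^ 2 = 0 := by linear_combination h0 - θ s * hs0
        exact ⟨rfl, hs0, pow_eq_zero_iff (by norm_num) |>.mp ht2⟩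
      · -- θ t - s * t = 0
        have h' := congrArg θ hc
        simp only [map_sub, map_mul, map_zero, hθ] at h'
        have h2 : t ^ 3 + t ^ 3 = 0 := by linear_combination h' + θ s * hc + t * h0
        obtain ⟨hs, ht⟩ := finishr0 h2
        exact ⟨rfl, hs, ht⟩
    · -- θ t + s * t = 0
      have h' := congrArg θ hc
      simp only [map_add, map_mul, map_zero, hθ] at h'
      have h2 : t ^ 3 + t ^ 3 = 0 := by linear_combination h' - θ s * hc + t * h0
      obtain ⟨hs, ht⟩ := finishr0 h2
      exact ⟨rfl, hs, ht⟩
  · -- case r ≠ 0 : derive a contradiction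
    exfalso
    have hθr : θ r ≠ 0 := fun h0 => hr (hθinj (by rw [h0, map_zero]))
    obtain ⟨u, hu⟩ : ∃ u, s = θ r * r * u :=
      ⟨s / (θ r * r), by field_simp⟩
    obtain ⟨v, hv⟩ : ∃ v, t = θ r * r ^ 2 * v :=
      ⟨t / (θ r * r ^ 2), by field_simp⟩
    subst hu; subst hv
    have hN : θ r * r * θ (θ r * r * u) - r * θ (θ r * r ^ 2 * v)
        - θ r * r ^ 3 * (θ r * r * u) - r ^ 2 * (θ r * r * u) ^ 2
        + θ (θ r * r * u) * (θ r * r * u) + (θ r * r ^ 2 * v) ^ 2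
        - θ r ^ 2 * r ^ 4 = 0 := h
    simp only [map_mul, map_pow, hθ] at hN
    have hE1 : (1 + u) * (θ u - u) + v ^ 2 - θ v - 1 = 0 := by
      have hkey : θ r ^ 2 * r ^ 4 * ((1 + u) * (θ u - u) + v ^ 2 - θ v - 1) = 0 := by
        linear_combination hN
      rcases mul_eq_zero.mp hkey with h' | h'
      · exact absurd h' (mul_ne_zero (pow_ne_zero _ hθr) (pow_ne_zero _ hr))
      · exact h'
    have hE2 : (1 + θ u) * (u ^ 3 - θ u) + (θ v) ^ 2 - v ^ 3 - 1 = 0 := by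
      have h' := congrArg θ hE1
      simp only [map_add, map_sub, map_mul, map_one, map_pow, map_zero, hθ] at h'
      linear_combination h'
    have hR : (v ^ 2 - u * v + u ^ 2 + u * θ u - u)
        * (v ^ 2 + (u - 1) * v + u ^ 2 + u * θ u + u - θ u + 1) = 0 := by
      linear_combination hE2
        + (-1 + (θ v) + (θ u) - u + v ^ 2 + u*(θ u) - u ^ 2) * hE1
        + ((θ u) - u + v ^ 2 + 2*u*(θ u) - u ^ 2 - (θ u)*v ^ 2 + u*v ^ 2 - u*(θ u) ^ 2
          - u ^ 2*v + u ^ 2*(θ u) - u ^ 3 + u ^ 2*v ^ 2 + u ^ 3*(θ u)) * h3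
    -- endgame from u = -1
    have endgame : u = -1 → False := by
      intro hu
      have hUm : θ u = -1 := by rw [hu, map_neg, map_one]
      have hsq : (v * (v + 1)) ^ 2 = 0 := by
        linear_combination hR
          + (2 - 3*v - 5*(θ u) - u + 2*(θ u) ^ 2 + 3*u*v + 3*u*(θ u) + u ^ 2
            - 2*(θ u)*v ^ 2 - u*v ^ 2 - u*(θ u) ^ 2 - 2*u ^ 2*(θ u) - u ^ 3) * hu
          + (7 - 2*(θ u) + 3*v ^ 2) * hUm
          + (-3 + v - v ^ 2 + v ^ 3) * h3
      have hvv : v * (v + 1) = 0 := pow_eq_zero_iff (by norm_num) |>.mp hsq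
      rcases mul_eq_zero.mp hvv with hv0 | hv1
      · have hθv0 : θ v = 0 := by rw [hv0, map_zero]
        exact one_ne_zero (α := K) (by linear_combination -hE1 + (θ u - u) * hu + v * hv0 - hθv0)
      · have hvm : v = -1 := eq_neg_of_add_eq_zero_left hv1
        have hθv1 : θ v = -1 := by rw [hvm, map_neg, map_one]
        exact one_ne_zero (α := K)
          (by linear_combination hE1 - (θ u - u) * hu - (v - 1) * hvm + hθv1)
    -- common final analysis from the key product equation
    have final : (u ^ 3 + θ u - 1) * (u + θ u - 1) ^ 3 = 0 → False := by
      intro hC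
      rcases mul_eq_zero.mp hC with hB | hA3
      · -- u^3 + θ u - 1 = 0
        have hB2 : (θ u) ^ 3 + u ^ 3 - 1 = 0 := by
          have h' := congrArg θ hB
          simp only [map_add, map_sub, map_one, map_pow, map_zero, hθ] at h'
          linear_combination h'
        have hcube : θ u * (θ u - 1) * (θ u + 1) = 0 := by linear_combination hB2 - hB
        rcases mul_eq_zero.mp hcube with h' | hUm1
        · rcases mul_eq_zero.mp h' with hU0 | hU1
          · -- θ u = 0
            have hcube2 : (u - 1) ^ 3 = 0 := by
              linear_combination hB - hU0 + (u - u ^ 2) * h3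
            have hu1 : u = 1 := sub_eq_zero.mp (pow_eq_zero_iff (by norm_num) |>.mp hcube2)
            rw [hu1, map_one] at hU0
            exact one_ne_zero hU0
          · -- θ u - 1 = 0
            have hU1' : θ u = 1 := sub_eq_zero.mp hU1
            have hu3 : u ^ 3 = 0 := by linear_combination hB - hU1
            have hu0 : u = 0 := pow_eq_zero_iff (by norm_num) |>.mp hu3
            rw [hu0, map_zero] at hU1'
            exact one_ne_zero hU1'.symm
        · -- θ u + 1 = 0
          have hUm : θ u = -1 := eq_neg_of_add_eq_zero_left hUm1
          have hcube3 : (u + 1) ^ 3 = 0 := by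
            linear_combination hB - hUm + (u ^ 2 + u + 1) * h3
          exact endgame (eq_neg_of_add_eq_zero_left
            (pow_eq_zero_iff (by norm_num) |>.mp hcube3))
      · -- (u + θ u - 1)^3 = 0
        have hA : u + θ u - 1 = 0 := pow_eq_zero_iff (by norm_num) |>.mp hA3
        have hA2 : θ u + u ^ 3 - 1 = 0 := by
          have h' := congrArg θ hA
          simp only [map_add, map_sub, map_one, map_zero, hθ] at h'
          linear_combination h'
        have hfac : u * (u - 1) * (u + 1) = 0 := by linear_combination hA2 - hA
        rcases mul_eq_zero.mp hfac with h' | hup1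
        · rcases mul_eq_zero.mp h' with hu0 | hu1
          · have hθu0 : θ u = 0 := by rw [hu0, map_zero]
            exact one_ne_zero (α := K) (by linear_combination -hA + hu0 + hθu0)
          · have hu1' : u = 1 := sub_eq_zero.mp hu1
            have hθu1 : θ u = 1 := by rw [hu1', map_one]
            exact one_ne_zero (α := K) (by linear_combination hA - hu1' - hθu1)
        · exact endgame (eq_neg_of_add_eq_zero_left hup1)
    rcases mul_eq_zero.mp hR with hF | hF
    · -- branch F1
      have hFp : (θ v) ^ 2 - θ u * θ v + (θ u) ^ 2 + θ u * u ^ 3 - θ u = 0 := by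
        have h' := congrArg θ hF
        simp only [map_add, map_sub, map_mul, map_one, map_pow, map_zero, hθ] at h'
        linear_combination h'
      apply final
      linear_combination
        (1 + 2*(θ v) + 2*v + v*(θ v) + v ^ 2 + 2*(θ u)*(θ v) + 2*(θ u)*v + 2*(θ u) ^ 2
          + u*(θ v) + 2*u*(θ u) + 2*u ^ 2 + v ^ 2*(θ v) + 2*(θ u)*v*(θ v) + (θ u)*v ^ 2
          + (θ u) ^ 2*(θ v) + 2*(θ u) ^ 2*v + 2*u*v ^ 2 + u*(θ u)*(θ v) + u*(θ u) ^ 2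
          + u ^ 2*(θ v) + u ^ 2*v + u ^ 3 + (θ u)*v ^ 3 + u*v ^ 3 + u*(θ u)*v ^ 2
          + 2*u ^ 2*v ^ 2 + u ^ 2*(θ u)*v + 2*u ^ 2*(θ u) ^ 2 + 2*u ^ 3*(θ u) + 2*u ^ 4) * hE1
        + (1 + v + 2*u + 2*(θ u)*(θ v) + 2*(θ u)*v + 2*(θ u) ^ 2 + u*v + v ^ 3) * hE2
        + ((θ v) ^ 2 + 2*v*(θ v) + (θ u)*(θ v) + 2*(θ u)*v + 2*v ^ 2*(θ v) + (θ u)*v ^ 2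
          + 2*(θ u) ^ 2*(θ v) + (θ u) ^ 2*v + v ^ 4 + 2*(θ u)*v ^ 3) * hF
        + (1 + 2*(θ u) + (θ u)*(θ v) + 2*v ^ 3) * hFp
        + (1 + (θ v) + v - (θ u) + v*(θ v) + (θ u)*(θ v) + (θ u)*v + 4*(θ u) ^ 2 + u*(θ v)
          + u*v + 4*u*(θ u) + 2*u ^ 2 + (θ u)*v*(θ v) + 2*(θ u) ^ 2*(θ v) + (θ u) ^ 2*v
          - 2*(θ u) ^ 3 + u*v*(θ v) + u*v ^ 2 + u*(θ u)*(θ v) + u*(θ u)*v - 2*u*(θ u) ^ 2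
          + 2*u ^ 2*(θ v) + u ^ 2*v - 2*u ^ 2*(θ u) - v ^ 3*(θ v) - (θ u)*(θ v) ^ 3
          - (θ u)*v ^ 2*(θ v) - (θ u) ^ 2*v ^ 2 + (θ u) ^ 4 + 2*u*v ^ 2*(θ v) + u*v ^ 3
          + u ^ 2*v ^ 2 + 2*u ^ 2*(θ u) ^ 2 + u ^ 3*(θ v) + u ^ 3*(θ u) + 2*u ^ 4
          - v ^ 3*(θ v) ^ 2 - v ^ 4*(θ v) + (θ u)*v ^ 3*(θ v) - (θ u) ^ 2*v ^ 2*(θ v)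
          - (θ u) ^ 2*v ^ 3 + u*v ^ 3*(θ v) - u*(θ u)*v ^ 2*(θ v) + u*(θ u)*v ^ 3
          - u*(θ u) ^ 2*v ^ 2 - u*(θ u) ^ 3*(θ v) - u*(θ u) ^ 3*v + u ^ 2*(θ u)*v*(θ v)
          - u ^ 2*(θ u)*v ^ 2 - u ^ 2*(θ u) ^ 3 + u ^ 3*v ^ 2 - u ^ 3*(θ u)*v
          - 2*u ^ 3*(θ u) ^ 2 + u ^ 4*(θ v) - 3*u ^ 4*(θ u) - (θ u)*v ^ 5
          - u*(θ u) ^ 2*v ^ 3 - u ^ 2*v ^ 4 - u ^ 2*(θ u)*v ^ 3 - u ^ 2*(θ u) ^ 2*v ^ 2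
          - u ^ 3*(θ u)*v ^ 2 - u ^ 3*(θ u) ^ 2*(θ v) - u ^ 3*(θ u) ^ 2*v - u ^ 3*(θ u) ^ 3
          + u ^ 4*(θ u) ^ 2 + u ^ 5*(θ u) + u ^ 6 - u ^ 3*(θ u)*v ^ 3) * h3
    · -- branch F2
      have hFp : (θ v) ^ 2 + (θ u - 1) * θ v + (θ u) ^ 2 + θ u * u ^ 3 + θ u - u ^ 3 + 1 = 0 := by
        have h' := congrArg θ hF
        simp only [map_add, map_sub, map_mul, map_one, map_pow, map_zero, hθ] at h'
        linear_combination h'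
      apply final
      linear_combination
        (2*(θ v) + 2*v + (θ u) + 2*u + v ^ 2 + (θ u)*(θ v) + 2*(θ u)*v + 2*(θ u) ^ 2
          + 2*u*(θ v) + 2*u*v + u ^ 2 + v ^ 2*(θ v) + 2*v ^ 3 + (θ u)*v*(θ v) + (θ u)*v ^ 2
          + (θ u) ^ 2*(θ v) + 2*(θ u) ^ 2*v + 2*u*v ^ 2 + u*(θ u)*(θ v) + 2*u*(θ u)*v
          + u*(θ u) ^ 2 + u ^ 2*(θ v) + 2*u ^ 2*v + 2*u ^ 2*(θ u) + u ^ 3 + 2*(θ u)*v ^ 3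
          + 2*u*v ^ 3 + u*(θ u)*v ^ 2 + 2*u ^ 2*v ^ 2 + 2*u ^ 2*(θ u)*v + 2*u ^ 2*(θ u) ^ 2
          + 2*u ^ 3*(θ u) + 2*u ^ 4) * hE1
        + (2 + 2*(θ v) + v + 2*(θ u) + u + (θ u)*(θ v) + (θ u)*v + 2*(θ u) ^ 2 + 2*u*v
          + v ^ 3) * hE2
        + ((θ v) ^ 2 + 2*v*(θ v) + v ^ 2 + (θ u)*(θ v) + 2*(θ u)*v + 2*v ^ 2*(θ v) + 2*v ^ 3
          + 2*(θ u)*v ^ 2 + 2*(θ u) ^ 2*(θ v) + (θ u) ^ 2*v + v ^ 4 + (θ u)*v ^ 3) * hF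
        + ((θ v) + (θ u) + 2*(θ u)*(θ v) + 2*v ^ 3) * hFp
        + (1 + (θ v) + v + 4*(θ u) ^ 2 + 2*u*(θ v) + 2*u*v + 3*u*(θ u) + 2*u ^ 2 - (θ v) ^ 3
          + 2*(θ u)*v*(θ v) + (θ u) ^ 2*v - (θ u) ^ 3 - u*(θ u)*(θ v) - 2*u*(θ u) ^ 2
          + 2*u ^ 2*(θ v) + 2*u ^ 2*v - 2*u ^ 2*(θ u) + 2*v ^ 3*(θ v) - (θ u)*(θ v) ^ 3
          - (θ u) ^ 2*(θ v) ^ 2 + (θ u) ^ 2*v*(θ v) + (θ u) ^ 4 - u*v*(θ v) ^ 2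
          - u*v ^ 2*(θ v) - 2*u*(θ u)*v ^ 2 - u*(θ u) ^ 2*(θ v) - u*(θ u) ^ 2*v
          + u ^ 2*v ^ 2 + 2*u ^ 2*(θ u) ^ 2 + u ^ 3*(θ v) + u ^ 3*v + u ^ 3*(θ u) + 2*u ^ 4
          - v ^ 3*(θ v) ^ 2 - v ^ 4*(θ v) - v ^ 5 - (θ u) ^ 2*v ^ 2*(θ v) - (θ u) ^ 2*v ^ 3
          - u*v ^ 4 - u*(θ u)*v ^ 2*(θ v) - 3*u*(θ u)*v ^ 3 - u*(θ u) ^ 2*v*(θ v)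
          - 2*u*(θ u) ^ 2*v ^ 2 - u*(θ u) ^ 3*(θ v) - u*(θ u) ^ 3*v + u ^ 2*(θ u)*v*(θ v)
          - 2*u ^ 2*(θ u)*v ^ 2 - u ^ 2*(θ u) ^ 2*v - u ^ 2*(θ u) ^ 3 + u ^ 3*v ^ 2
          - 3*u ^ 3*(θ u) ^ 2 + u ^ 4*(θ v) - 2*u ^ 4*(θ u) - (θ u)*v ^ 5 - u*v ^ 5
          - u*(θ u)*v ^ 4 - u*(θ u) ^ 2*v ^ 3 - u ^ 2*v ^ 4 - u ^ 2*(θ u)*v ^ 3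
          - u ^ 2*(θ u) ^ 2*v ^ 2 + u ^ 3*v ^ 3 - u ^ 3*(θ u)*v ^ 2 - u ^ 3*(θ u) ^ 2*(θ v)
          - u ^ 3*(θ u) ^ 2*v - u ^ 3*(θ u) ^ 3 + u ^ 4*(θ u) ^ 2 + u ^ 5*(θ u) + u ^ 6
          - u ^ 3*(θ u)*v ^ 3) * h3
end

section
/- Let K be a field of characteristic 3 with a Tits endomorphism θ. For all r, s, t ∈ K, the norm N of the group T is invariant under inversion in T: N(−r, −s+r^{θ+1}, −t) = N(r,s,t). -/
/-- Let `K` be a field of characteristic 3 with a Tits endomorphism `θ`.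
The norm `N` is invariant under inversion in `T`:
`N(−r, −s+r^{θ+1}, −t) = N(r,s,t)`. -/
theorem stmt_10 {K : Type*} [Field K] [CharP K 3]
    (θ : K →+* K) (hθ : ∀ x : K, θ (θ x) = x ^ 3)
    (r s t : K) :
    Nnorm θ (-r) (-s + θ r * r) (-t) = Nnorm θ r s t := by
  have h3 : (3 : K) = 0 := by exact_mod_cast CharP.cast_eq_zero K 3
  simp only [Nnorm, map_neg, map_add, map_mul, hθ]
  linear_combination (θ r * r ^ 3 * s - θ r * r * θ s) * h3
end

section
/- Let K be a field of characteristic 3 with a Tits endomorphism θ, and let T = K × K × K be the group with multiplication (r,s,t)·(w,u,v) = (r+w, s+u+θ(r)w, t+v−ru+sw−r^{θ+1}w). For every nonzero z ∈ K, the map (r,s,t) ↦ (zr, z^{θ+1}s, z^{θ+2}t) is an automorphism of the group T. Conversely, if z, z₁, z₂ ∈ K are nonzero and the map (r,s,t) ↦ (zr, z₁s, z₂t) is a group homomorphism of T, then z₁ = z^{θ+1} and z₂ = z^{θ+2}. -/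
/-- Let `K` be a field of characteristic 3 with a Tits endomorphism `θ`.
For every nonzero `z ∈ K`, the map `(r,s,t) ↦ (zr, z^{θ+1}s, z^{θ+2}t)` is an
automorphism of the group `T`. Conversely, if `z, z₁, z₂` are nonzero and
`(r,s,t) ↦ (zr, z₁s, z₂t)` is a group homomorphism of `T`, then `z₁ = z^{θ+1}`
and `z₂ = z^{θ+2}`. -/
theorem stmt_13 {K : Type*} [Field K] [CharP K 3]
    (θ : K →+* K) (hθ : ∀ x : K, θ (θ x) = x ^ 3) :
    (∀ z : K, z ≠ 0 →
      Function.Bijective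
        (fun a : K × K × K =>
          ((z * a.1, θ z * z * a.2.1, θ z * z ^ 2 * a.2.2) : K × K × K)) ∧
      ∀ a b : K × K × K,
        Tmul θ (z * a.1, θ z * z * a.2.1, θ z * z ^ 2 * a.2.2)
               (z * b.1, θ z * z * b.2.1, θ z * z ^ 2 * b.2.2)
          = (z * (Tmul θ a b).1, θ z * z * (Tmul θ a b).2.1,
              θ z * z ^ 2 * (Tmul θ a b).2.2)) ∧
    (∀ z z₁ z₂ : K, z ≠ 0 → z₁ ≠ 0 → z₂ ≠ 0 →
      (∀ a b : K × K × K,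
        Tmul θ (z * a.1, z₁ * a.2.1, z₂ * a.2.2) (z * b.1, z₁ * b.2.1, z₂ * b.2.2)
          = (z * (Tmul θ a b).1, z₁ * (Tmul θ a b).2.1, z₂ * (Tmul θ a b).2.2)) →
      z₁ = θ z * z ∧ z₂ = θ z * z ^ 2) := by
  constructor
  · intro z hz
    have hz' : θ z ≠ 0 := fun h => hz (θ.injective (by simp [h]))
    constructor
    · refine Function.bijective_iff_has_inverse.mpr
        ⟨fun a => (z⁻¹ * a.1, (θ z * z)⁻¹ * a.2.1, (θ z * z ^ 2)⁻¹ * a.2.2), ?_, ?_⟩ <;>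
        intro a <;> ext <;> field_simp
    · intro a b
      simp only [Tmul, Prod.ext_iff, map_add, map_mul]
      refine ⟨by ring, by ring, by ring⟩
  · intro z z₁ z₂ hz hz₁ hz₂ h
    have h1 := congrArg (fun p : K × K × K => p.2.1) (h (1, 0, 0) (1, 0, 0))
    have h2 := congrArg (fun p : K × K × K => p.2.2) (h (0, 1, 0) (1, 0, 0))
    simp [Tmul] at h1 h2
    exact ⟨h1.symm, by rw [← h2, ← h1]; ring⟩
end

section
/- Let K be a field of characteristic 2 with a Tits endomorphism θ and let ν be a θ-invariant valuation of K. Then for all s, t ∈ K, ν(R(s,t)) = min{ (√2+2)·ν(s), √2·ν(t) }, with the conventions ν(0) = ∞ and c·∞ = ∞ for c > 0. -/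
private lemma val_add_eq {K : Type*} [Field K] [CharP K 2]
    (ν : K → WithTop ℝ) (hadd : ∀ x y : K, min (ν x) (ν y) ≤ ν (x + y))
    {x y : K} (h : ν x < ν y) : ν (x + y) = ν x := by
  have hx : x + y + y = x := by
    rw [add_assoc, CharTwo.add_self_eq_zero, add_zero]
  have h1 : ν x ≤ ν (x + y) := le_trans (le_min le_rfl h.le) (hadd x y)
  have h2 : min (ν (x + y)) (ν y) ≤ ν x := by
    have := hadd (x + y) y; rwa [hx] at this
  rcases min_cases (ν (x + y)) (ν y) with ⟨he, _⟩ | ⟨he, _⟩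
  · exact le_antisymm (he ▸ h2) h1
  · exact absurd h (not_lt.mpr (he ▸ h2))

/-- Let `K` be a field of characteristic 2 with a Tits endomorphism `θ` and `ν`
a `θ`-invariant valuation of `K`. Then for all `s, t ∈ K`,
`ν(R(s,t)) = min{(√2+2)·ν(s), √2·ν(t)}` (conventions `ν(0) = ∞` and `c·∞ = ∞`
for `c > 0`). -/
theorem stmt_18 {K : Type*} [Field K] [CharP K 2]
    (θ : K →+* K) (hθ : ∀ x : K, θ (θ x) = x ^ 2)
    (ν : K → WithTop ℝ)
    (hν0 : ∀ x : K, ν x = ⊤ ↔ x = 0)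
    (hmul : ∀ x y : K, ν (x * y) = ν x + ν y)
    (hadd : ∀ x y : K, min (ν x) (ν y) ≤ ν (x + y))
    (hnt : ∃ x : K, x ≠ 0 ∧ ν x ≠ 0)
    (hinv : ∀ x : K, x ≠ 0 → ν (θ x) = smulTop (Real.sqrt 2) (ν x))
    (s t : K) :
    ν (Rnorm θ s t)
      = min (smulTop (Real.sqrt 2 + 2) (ν s)) (smulTop (Real.sqrt 2) (ν t)) := by
  set q := Real.sqrt 2 with hqdef
  have hq2 : q ^ 2 = 2 := Real.sq_sqrt (by norm_num)
  have hq1 : (1:ℝ) < q := by nlinarith [Real.sqrt_nonneg 2]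
  have hq0 : (0:ℝ) < q := by linarith
  have h2K : (2 : K) = 0 := by exact_mod_cast CharP.cast_eq_zero K 2
  by_cases hs : s = 0
  · subst hs
    have hνs : ν 0 = ⊤ := (hν0 0).mpr rfl
    have hR : Rnorm θ 0 t = θ t := by simp [Rnorm]
    rw [hR, hνs]
    by_cases ht : t = 0
    · subst ht
      rw [map_zero, hνs]
      rfl
    · rw [hinv t ht]
      exact (min_eq_right le_top).symm
  · obtain ⟨a, ha⟩ := WithTop.ne_top_iff_exists.mp (fun h => hs ((hν0 s).mp h))
    have hθs : ν (θ s) = ((q * a : ℝ) : WithTop ℝ) := by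
      rw [hinv s hs, ← ha]; rfl
    have hv1 : ν (θ s * s ^ 2) = (((q + 2) * a : ℝ) : WithTop ℝ) := by
      rw [hmul, hθs, pow_two, hmul, ← ha, ← WithTop.coe_add, ← WithTop.coe_add,
        WithTop.coe_eq_coe]
      ring
    by_cases ht : t = 0
    · subst ht
      have hν0' : ν (0:K) = ⊤ := (hν0 0).mpr rfl
      have hR : Rnorm θ s 0 = θ s * s ^ 2 := by simp [Rnorm]
      rw [hR, hv1, ← ha, hν0', show smulTop q ⊤ = ⊤ from rfl,
        min_eq_left le_top]
      rfl
    · obtain ⟨b, hb⟩ := WithTop.ne_top_iff_exists.mp (fun h => ht ((hν0 t).mp h))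
      have hθt : ν (θ t) = ((q * b : ℝ) : WithTop ℝ) := by
        rw [hinv t ht, ← hb]; rfl
      have hv2 : ν (s * t) = ((a + b : ℝ) : WithTop ℝ) := by
        rw [hmul, ← ha, ← hb, ← WithTop.coe_add]
      have hRHS : min (smulTop (q + 2) (ν s)) (smulTop q (ν t))
          = ((min ((q + 2) * a) (q * b) : ℝ) : WithTop ℝ) := by
        rw [← ha, ← hb, WithTop.coe_min]; rfl
      rw [hRHS]
      -- a + b ≥ min
      have habmin : min ((q + 2) * a) (q * b) ≤ a + b := by
        by_contra hc
        push_neg at hc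
        rw [lt_min_iff] at hc
        have hk : b < (q + 1) * a := by linarith [hc.1]
        have h' : (q - 1) * b < (q - 1) * ((q + 1) * a) :=
          mul_lt_mul_of_pos_left hk (by linarith)
        rw [show (q - 1) * ((q + 1) * a) = a from by linear_combination a * hq2] at h'
        linarith [hc.2]
      -- lower bound
      have hlow : ((min ((q + 2) * a) (q * b) : ℝ) : WithTop ℝ) ≤ ν (Rnorm θ s t) := by
        have h12 : ((min ((q + 2) * a) (q * b) : ℝ) : WithTop ℝ) ≤ ν (θ s * s ^ 2 + s * t) := by
          refine le_trans ?_ (hadd _ _)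
          rw [hv1, hv2, le_min_iff]
          exact ⟨WithTop.coe_le_coe.mpr (min_le_left _ _), WithTop.coe_le_coe.mpr habmin⟩
        refine le_trans ?_ (hadd (θ s * s ^ 2 + s * t) (θ t))
        rw [le_min_iff, hθt]
        exact ⟨h12, WithTop.coe_le_coe.mpr (min_le_right _ _)⟩
      rcases lt_trichotomy ((q + 2) * a) (q * b) with hlt | heq | hgt
      · -- min attained uniquely by first term
        have hab : (q + 2) * a < a + b := by
          have h' : q * ((q + 1) * a) < q * b := by
            rw [show q * ((q + 1) * a) = (q + 2) * a from by linear_combination a * hq2]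
            exact hlt
          have := (mul_lt_mul_iff_right₀ hq0).mp h'
          linarith
        have hrest : (((q + 2) * a : ℝ) : WithTop ℝ) < ν (s * t + θ t) := by
          refine lt_of_lt_of_le ?_ (hadd _ _)
          rw [hv2, hθt, lt_min_iff]
          exact ⟨WithTop.coe_lt_coe.mpr hab, WithTop.coe_lt_coe.mpr hlt⟩
        have hgroup : Rnorm θ s t = θ s * s ^ 2 + (s * t + θ t) := by
          rw [Rnorm, add_assoc]
        rw [hgroup, val_add_eq ν hadd (by rw [hv1]; exact hrest), hv1,
          min_eq_left hlt.le]
      · -- equal case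
        have hba : b = (q + 1) * a := by
          have h0 : q * b = q * ((q + 1) * a) := by
            linear_combination -heq - a * hq2
          exact mul_left_cancel₀ hq0.ne' h0
        have hmin_eq : min ((q + 2) * a) (q * b) = q * b := min_eq_right heq.ge
        rw [hmin_eq] at hlow ⊢
        refine le_antisymm ?_ hlow
        by_contra hcon
        push_neg at hcon
        -- hcon : ↑(q*b) < ν (Rnorm θ s t)
        have key1 : s * (t + θ s * s) = θ t + Rnorm θ s t := by
          simp only [Rnorm]
          linear_combination (-θ t) * h2K
        have h5 : (↑a : WithTop ℝ) + ν (t + θ s * s) = ((q * b : ℝ) : WithTop ℝ) := by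
          rw [ha, ← hmul, key1, val_add_eq ν hadd (by rw [hθt]; exact hcon), hθt]
        have hwne : ν (t + θ s * s) ≠ ⊤ := by
          intro hT
          rw [hT, WithTop.add_top] at h5
          exact WithTop.top_ne_coe h5
        obtain ⟨c, hc⟩ := WithTop.ne_top_iff_exists.mp hwne
        have hac : a + c = q * b := by
          rw [← hc, ← WithTop.coe_add] at h5
          exact_mod_cast h5
        have key2 : t * (t + θ s * s) = θ (Rnorm θ s t) + θ s * Rnorm θ s t := by
          simp only [Rnorm, map_add, map_mul, map_pow, hθ]
          linear_combination (-(s ^ 2 * (θ s) ^ 2 + θ s * θ t)) * h2K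
        have hN0 : Rnorm θ s t ≠ 0 := by
          intro h0
          rw [h0] at key2
          simp only [map_zero, mul_zero, add_zero] at key2
          rcases mul_eq_zero.mp key2 with h | h
          · exact ht h
          · exact hwne ((hν0 _).mpr h)
        obtain ⟨r, hr⟩ := WithTop.ne_top_iff_exists.mp (fun h => hN0 ((hν0 _).mp h))
        have hmr : q * b < r := by
          rw [← hr] at hcon
          exact_mod_cast hcon
        have hge : min (q * r) (q * a + r) ≤ b + c := by
          have e1 : ν (t * (t + θ s * s)) = ((b + c : ℝ) : WithTop ℝ) := by
            rw [hmul, ← hb, ← hc, ← WithTop.coe_add]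
          have e2 : ((min (q * r) (q * a + r) : ℝ) : WithTop ℝ)
              ≤ ν (θ (Rnorm θ s t) + θ s * Rnorm θ s t) := by
            refine le_trans ?_ (hadd _ _)
            rw [hinv _ hN0, ← hr, hmul, hθs, ← hr, ← WithTop.coe_add,
              show smulTop q ((r : ℝ) : WithTop ℝ) = ((q * r : ℝ) : WithTop ℝ) from rfl,
              WithTop.coe_min]
          rw [← key2, e1] at e2
          exact_mod_cast e2
        rcases min_cases (q * r) (q * a + r) with ⟨he, _⟩ | ⟨he, _⟩
        · rw [he] at hge
          have h' : q * (q * b) < q * r := mul_lt_mul_of_pos_left hmr hq0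
          rw [show q * (q * b) = 2 * b from by linear_combination b * hq2] at h'
          linarith [hge, h', hac, hba, heq]
        · rw [he] at hge
          linarith [hge, hmr, hac, hba, heq]
      · -- min attained uniquely by last term
        have hab : q * b < a + b := by
          have h' : q * ((q - 1) * b) < q * a := by
            rw [show q * ((q - 1) * b) = (q - 1) * (q * b) from by ring]
            calc (q - 1) * (q * b) < (q - 1) * ((q + 2) * a) :=
                  mul_lt_mul_of_pos_left hgt (by linarith)
              _ = q * a := by linear_combination a * hq2
          have := (mul_lt_mul_iff_right₀ hq0).mp h'
          linarith
        have hrest : ((q * b : ℝ) : WithTop ℝ) < ν (θ s * s ^ 2 + s * t) := by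
          refine lt_of_lt_of_le ?_ (hadd _ _)
          rw [hv1, hv2, lt_min_iff]
          exact ⟨WithTop.coe_lt_coe.mpr hgt, WithTop.coe_lt_coe.mpr hab⟩
        have hgroup : Rnorm θ s t = θ t + (θ s * s ^ 2 + s * t) := by
          rw [Rnorm, add_comm]
        rw [hgroup, val_add_eq ν hadd (by rw [hθt]; exact hrest), hθt,
          min_eq_right hgt.le]
end

section
/- Let K be a field of characteristic 2 with a Tits endomorphism θ and let ν be a θ-invariant valuation of K. Then for all a, b in the group S = K × K, ν(R(a·b)) ≥ min{ ν(R(a)), ν(R(b)) }, with the convention ν(0) = ∞. -/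
/-- The multiplication `(s,t)·(u,v) = (s+u, t+v+θ(s)u)` on `S = K × K`. -/
def Smul {K : Type*} [Field K] (θ : K →+* K) (a b : K × K) : K × K :=
  (a.1 + b.1, a.2 + b.2 + θ a.1 * b.1)

lemma smulTop_coe (c r : ℝ) : smulTop c (↑r) = ↑(c * r) := rfl

section RealAux

variable {r2 α β : ℝ}

lemma rl1 (h2 : r2 * r2 = 2) (h1 : 1 < r2)
    (h : r2 * α + (α + α) < r2 * β) : r2 * α + (α + α) < α + β := by
  have h0 : (0:ℝ) < r2 := by linarith
  have key : r2 * (r2 * α + α) = r2 * α + (α + α) := by linear_combination α * h2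
  have h4 : r2 * (r2 * α + α) < r2 * β := by rw [key]; exact h
  have h3 : r2 * α + α < β := (mul_lt_mul_iff_right₀ h0).mp h4
  linarith

lemma rl2 (h2 : r2 * r2 = 2) (h1 : 1 < r2)
    (h : r2 * β < r2 * α + (α + α)) : r2 * β < α + β := by
  have h0 : (0:ℝ) < r2 + 2 := by linarith
  have key : (r2 + 2) * ((r2 - 1) * β) = r2 * β := by linear_combination β * h2
  have h4 : (r2 + 2) * ((r2 - 1) * β) < (r2 + 2) * α := by rw [key]; linarith
  have h3 : (r2 - 1) * β < α := (mul_lt_mul_iff_right₀ h0).mp h4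
  linarith

lemma rl3 (h2 : r2 * r2 = 2) (h1 : 1 < r2)
    (h : α + β < r2 * α + (α + α)) : r2 * β < α + β := by
  have h0 : (0:ℝ) < r2 + 1 := by linarith
  have key : (r2 + 1) * ((r2 - 1) * β) = β := by linear_combination β * h2
  have h4 : (r2 + 1) * ((r2 - 1) * β) < (r2 + 1) * α := by rw [key]; linarith
  have h3 : (r2 - 1) * β < α := (mul_lt_mul_iff_right₀ h0).mp h4
  linarith

lemma rleq (h2 : r2 * r2 = 2) (h1 : 1 < r2)
    (h : r2 * α + (α + α) = r2 * β) : β = r2 * α + α := by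
  exact mul_left_cancel₀ (ne_of_gt (by linarith : (0:ℝ) < r2))
    (by linear_combination -h - α * h2)

end RealAux

section Aux

variable {K : Type*} [Field K] [CharP K 2] {ν : K → WithTop ℝ}

/-- If `ν x < ν y` then `ν (x+y) = ν x`. -/
lemma nu_add_eq_left (hadd : ∀ x y : K, min (ν x) (ν y) ≤ ν (x + y))
    {x y : K} (h : ν x < ν y) : ν (x + y) = ν x := by
  refine le_antisymm ?_ ?_
  · have h2 := hadd (x + y) y
    rw [add_assoc, CharTwo.add_self_eq_zero, add_zero] at h2
    rcases min_le_iff.mp h2 with h3 | h3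
    · exact h3
    · exact absurd (lt_of_le_of_lt h3 h) (lt_irrefl _)
  · have := hadd x y
    rwa [min_eq_left h.le] at this

omit [CharP K 2] in
lemma nu_one (hν0 : ∀ x : K, ν x = ⊤ ↔ x = 0)
    (hmul : ∀ x y : K, ν (x * y) = ν x + ν y) : ν (1 : K) = 0 := by
  have h := hmul 1 1
  rw [one_mul] at h
  have hne : ν (1 : K) ≠ ⊤ := fun ht => one_ne_zero ((hν0 1).mp ht)
  obtain ⟨c, hc⟩ := WithTop.ne_top_iff_exists.mp hne
  rw [← hc] at h ⊢
  norm_cast at h ⊢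
  linarith

/-- Key lemma: `ν R(s,t) ≤ min (ν (θ s * s²)) (ν (θ t))`. -/
lemma nu_R_le (θ : K →+* K) (hθ : ∀ x : K, θ (θ x) = x ^ 2)
    (hν0 : ∀ x : K, ν x = ⊤ ↔ x = 0)
    (hmul : ∀ x y : K, ν (x * y) = ν x + ν y)
    (hadd : ∀ x y : K, min (ν x) (ν y) ≤ ν (x + y))
    (hinv : ∀ x : K, x ≠ 0 → ν (θ x) = smulTop (Real.sqrt 2) (ν x))
    (s t : K) :
    ν (Rnorm θ s t) ≤ min (ν (θ s * s ^ 2)) (ν (θ t)) := by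
  set r2 := Real.sqrt 2 with hr2
  have hr2sq : r2 * r2 = 2 := Real.mul_self_sqrt (by norm_num)
  have hr2gt1 : 1 < r2 := by nlinarith [Real.sqrt_nonneg 2]
  have h2K : (2 : K) = 0 := by exact_mod_cast CharP.cast_eq_zero K 2
  have hθne : ∀ x : K, x ≠ 0 → θ x ≠ 0 := fun x hx => by
    simpa using (map_ne_zero θ).mpr hx
  have hnetop : ∀ x : K, x ≠ 0 → ∃ r : ℝ, ν x = ↑r := fun x hx => by
    obtain ⟨r, hr⟩ := WithTop.ne_top_iff_exists.mp (fun ht => hx ((hν0 x).mp ht))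
    exact ⟨r, hr.symm⟩
  have h1 : ν (1 : K) = 0 := nu_one hν0 hmul
  by_cases hs : s = 0
  · subst hs
    have : Rnorm θ 0 t = θ t := by simp [Rnorm]
    rw [this]
    refine le_min ?_ le_rfl
    simp [(hν0 _).mpr]
  by_cases ht : t = 0
  · subst ht
    have : Rnorm θ s 0 = θ s * s ^ 2 := by simp [Rnorm]
    rw [this]
    refine le_min le_rfl ?_
    simp [(hν0 _).mpr]
  obtain ⟨α, hα⟩ := hnetop s hs
  obtain ⟨β, hβ⟩ := hnetop t ht
  have hT1 : ν (θ s * s ^ 2) = ((r2 * α + (α + α) : ℝ) : WithTop ℝ) := by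
    rw [hmul, pow_two, hmul, hinv s hs, hα]
    rfl
  have hT2 : ν (s * t) = ((α + β : ℝ) : WithTop ℝ) := by
    rw [hmul, hα, hβ]; rfl
  have hT3 : ν (θ t) = ((r2 * β : ℝ) : WithTop ℝ) := by
    rw [hinv t ht, hβ]; rfl
  rcases lt_trichotomy (r2 * α + (α + α)) (r2 * β) with hc | hc | hc
  · -- T1 strictly minimal
    have h23 : (↑(r2 * α + (α + α)) : WithTop ℝ) < ν (s * t + θ t) := by
      refine lt_of_lt_of_le ?_ (hadd _ _)
      rw [hT2, hT3, lt_min_iff]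
      constructor <;> rw [WithTop.coe_lt_coe]
      · exact rl1 hr2sq hr2gt1 hc
      · exact hc
    have hre : Rnorm θ s t = θ s * s ^ 2 + (s * t + θ t) := by rw [Rnorm, add_assoc]
    rw [hre, nu_add_eq_left hadd (by rw [hT1]; exact h23), hT1, hT3]
    refine le_min le_rfl ?_
    rw [WithTop.coe_le_coe]; linarith
  · -- equal case: use w = t / (θ s * s)
    have hβα : β = r2 * α + α := rleq hr2sq hr2gt1 hc
    have hθs : θ s ≠ 0 := hθne s hs
    have hd : θ s * s ≠ 0 := mul_ne_zero hθs hs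
    set w : K := t / (θ s * s) with hw
    have hwne : w ≠ 0 := div_ne_zero ht hd
    have hνw : ν w = 0 := by
      have hwt : w * (θ s * s) = t := div_mul_cancel₀ t hd
      have h5 := hmul w (θ s * s)
      rw [hwt, hβ, hmul, hinv s hs, hα, smulTop_coe] at h5
      obtain ⟨γ, hγ⟩ := hnetop w hwne
      rw [hγ] at h5
      push_cast at h5
      have h6 : β = γ + (r2 * α + α) := by exact_mod_cast h5
      have h7 : γ = 0 := by linarith
      rw [hγ, h7]
      rfl
    set z : K := 1 + w + θ w with hz
    have hRz : Rnorm θ s t = θ s * s ^ 2 * z := by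
      rw [Rnorm, hz, hw, map_div₀, map_mul, hθ]
      field_simp
    -- show ν z ≤ 0
    have hνz : ν z ≤ 0 := by
      by_cases hz0 : z = 0
      · -- impossible: would force w² = w with w ∉ {0,1} issues
        exfalso
        have h0 : 1 + w + θ w = 0 := by rw [← hz]; exact hz0
        have hθw : θ w = 1 + w := by linear_combination h0 - (1 + w) * h2K
        have h7 : w ^ 2 = 1 + θ w := by
          calc w ^ 2 = θ (θ w) := (hθ w).symm
            _ = θ (1 + w) := by rw [hθw]
            _ = 1 + θ w := by rw [map_add, map_one]
        have hw2 : w ^ 2 = w := by linear_combination h7 + hθw + h2K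
        rcases mul_eq_zero.mp (show w * (w - 1) = 0 by linear_combination hw2) with h | h
        · exact hwne h
        · have hw1 : w = 1 := by linear_combination h
          rw [hw1, map_one] at hθw
          exact one_ne_zero (by linear_combination hθw + h2K)
      · obtain ⟨γ, hγ⟩ := hnetop z hz0
        rw [hγ]
        by_contra hpos
        push_neg at hpos
        have hγpos : (0 : ℝ) < γ := by exact_mod_cast hpos
        -- z + θ z = w * (1 + w)
        have hid : z + θ z = w * (1 + w) := by
          rw [hz]
          simp only [map_add, map_one, hθ]
          linear_combination (1 + θ w) * h2K
        have hνzθ : (0 : WithTop ℝ) < ν (z + θ z) := by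
          refine lt_of_lt_of_le ?_ (hadd z (θ z))
          rw [hinv z hz0, hγ, smulTop_coe, lt_min_iff]
          constructor
          · exact_mod_cast hγpos
          · exact_mod_cast (by nlinarith : (0:ℝ) < r2 * γ)
        rw [hid, hmul, hνw, zero_add] at hνzθ
        -- so ν (1 + w) > 0
        have h1w : (1 : K) + w ≠ 0 := by
          intro h0
          have hw1 : w = 1 := by linear_combination h0 - h2K
          have hz1 : z = 1 := by
            rw [hz, hw1, map_one]; linear_combination h2K
          rw [hz1, h1] at hγ
          have : γ = 0 := by exact_mod_cast hγ.symm
          linarith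
        obtain ⟨δ, hδ⟩ := hnetop _ h1w
        have hδpos : (0 : ℝ) < δ := by
          rw [hδ] at hνzθ; exact_mod_cast hνzθ
        have hze : z = 1 + ((1 + w) + θ (1 + w)) := by
          rw [hz]
          simp only [map_add, map_one]
          linear_combination -h2K
        have hνet : (0 : WithTop ℝ) < ν ((1 + w) + θ (1 + w)) := by
          refine lt_of_lt_of_le ?_ (hadd (1 + w) (θ (1 + w)))
          rw [hinv _ h1w, hδ, smulTop_coe, lt_min_iff]
          constructor
          · exact_mod_cast hδpos
          · exact_mod_cast (by nlinarith : (0:ℝ) < r2 * δ)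
        have hzν : ν z = 0 := by
          rw [hze, nu_add_eq_left hadd (by rw [h1]; exact hνet), h1]
        rw [hγ] at hzν
        have : γ = 0 := by exact_mod_cast hzν
        linarith
    have hmin : min (ν (θ s * s ^ 2)) (ν (θ t)) = ((r2 * α + (α + α) : ℝ) : WithTop ℝ) := by
      rw [hT1, hT3, min_eq_left (by rw [WithTop.coe_le_coe]; linarith)]
    rw [hRz, hmul, hmin]
    calc ν (θ s * s ^ 2) + ν z ≤ ν (θ s * s ^ 2) + 0 := add_le_add_right hνz _
      _ = ((r2 * α + (α + α) : ℝ) : WithTop ℝ) := by rw [add_zero, hT1]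
  · -- T3 strictly minimal
    have h12 : (↑(r2 * β) : WithTop ℝ) < ν (θ s * s ^ 2 + s * t) := by
      refine lt_of_lt_of_le ?_ (hadd _ _)
      rw [hT1, hT2, lt_min_iff]
      constructor <;> rw [WithTop.coe_lt_coe]
      · exact hc
      · exact rl2 hr2sq hr2gt1 hc
    have hre : Rnorm θ s t = θ t + (θ s * s ^ 2 + s * t) := by rw [Rnorm]; ring
    rw [hre, nu_add_eq_left hadd (by rw [hT3]; exact h12), hT3, hT1]
    refine le_min ?_ le_rfl
    rw [WithTop.coe_le_coe]; linarith

end Aux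

/-- Let `K` be a field of characteristic 2 with a Tits endomorphism `θ` and `ν`
a `θ`-invariant valuation of `K`. Then for all `a, b` in the group `S = K × K`,
`ν(R(a·b)) ≥ min{ν(R(a)), ν(R(b))}` (convention `ν(0) = ∞`). -/
theorem stmt_19 {K : Type*} [Field K] [CharP K 2]
    (θ : K →+* K) (hθ : ∀ x : K, θ (θ x) = x ^ 2)
    (ν : K → WithTop ℝ)
    (hν0 : ∀ x : K, ν x = ⊤ ↔ x = 0)
    (hmul : ∀ x y : K, ν (x * y) = ν x + ν y)
    (hadd : ∀ x y : K, min (ν x) (ν y) ≤ ν (x + y))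
    (hnt : ∃ x : K, x ≠ 0 ∧ ν x ≠ 0)
    (hinv : ∀ x : K, x ≠ 0 → ν (θ x) = smulTop (Real.sqrt 2) (ν x))
    (a b : K × K) :
    min (ν (Rnorm θ a.1 a.2)) (ν (Rnorm θ b.1 b.2))
      ≤ ν (Rnorm θ (Smul θ a b).1 (Smul θ a b).2) := by
  obtain ⟨s, t⟩ := a
  obtain ⟨u, v⟩ := b
  simp only [Smul]
  set r2 := Real.sqrt 2 with hr2
  have hr2sq : r2 * r2 = 2 := Real.mul_self_sqrt (by norm_num)
  have hr2gt1 : 1 < r2 := by nlinarith [Real.sqrt_nonneg 2]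
  have hnetop : ∀ x : K, x ≠ 0 → ∃ r : ℝ, ν x = ↑r := fun x hx => by
    obtain ⟨r, hr⟩ := WithTop.ne_top_iff_exists.mp (fun hT => hx ((hν0 x).mp hT))
    exact ⟨r, hr.symm⟩
  have h2K : (2 : K) = 0 := by exact_mod_cast CharP.cast_eq_zero K 2
  have hiden : Rnorm θ (s + u) (t + v + θ s * u) =
      Rnorm θ s t + (Rnorm θ u v + (s * v + (u * t + θ s * s * u))) := by
    simp only [Rnorm, map_add, map_mul, hθ]
    linear_combination (θ s * s * u + θ s * u ^ 2 + θ u * s * u + θ u * s ^ 2) * h2K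
  have keyA := nu_R_le θ hθ hν0 hmul hadd hinv s t
  have keyB := nu_R_le θ hθ hν0 hmul hadd hinv u v
  set M : WithTop ℝ := min (ν (Rnorm θ s t)) (ν (Rnorm θ u v)) with hM
  -- bound for s * v
  have bd1 : M ≤ ν (s * v) := by
    by_cases hs : s = 0
    · rw [hs, zero_mul, (hν0 0).mpr rfl]; exact le_top
    by_cases hv : v = 0
    · rw [hv, mul_zero, (hν0 0).mpr rfl]; exact le_top
    obtain ⟨α, hα⟩ := hnetop s hs
    obtain ⟨β, hβ⟩ := hnetop v hv
    have hA : ν (Rnorm θ s t) ≤ ((r2 * α + (α + α) : ℝ) : WithTop ℝ) := by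
      refine le_trans keyA (le_trans (min_le_left _ _) ?_)
      rw [hmul, pow_two, hmul, hinv s hs, hα]; exact le_of_eq rfl
    have hB : ν (Rnorm θ u v) ≤ ((r2 * β : ℝ) : WithTop ℝ) := by
      refine le_trans keyB (le_trans (min_le_right _ _) ?_)
      rw [hinv v hv, hβ]; exact le_of_eq rfl
    have hsv : ν (s * v) = ((α + β : ℝ) : WithTop ℝ) := by
      rw [hmul, hα, hβ]; rfl
    rw [hsv, hM]
    by_cases hle : r2 * α + (α + α) ≤ α + β
    · exact le_trans (min_le_left _ _) (le_trans hA (by rw [WithTop.coe_le_coe]; exact hle))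
    · push_neg at hle
      have := rl3 hr2sq hr2gt1 hle
      exact le_trans (min_le_right _ _)
        (le_trans hB (by rw [WithTop.coe_le_coe]; linarith))
  -- bound for u * t
  have bd2 : M ≤ ν (u * t) := by
    by_cases hu : u = 0
    · rw [hu, zero_mul, (hν0 0).mpr rfl]; exact le_top
    by_cases ht : t = 0
    · rw [ht, mul_zero, (hν0 0).mpr rfl]; exact le_top
    obtain ⟨α, hα⟩ := hnetop u hu
    obtain ⟨β, hβ⟩ := hnetop t ht
    have hA : ν (Rnorm θ u v) ≤ ((r2 * α + (α + α) : ℝ) : WithTop ℝ) := by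
      refine le_trans keyB (le_trans (min_le_left _ _) ?_)
      rw [hmul, pow_two, hmul, hinv u hu, hα]; exact le_of_eq rfl
    have hB : ν (Rnorm θ s t) ≤ ((r2 * β : ℝ) : WithTop ℝ) := by
      refine le_trans keyA (le_trans (min_le_right _ _) ?_)
      rw [hinv t ht, hβ]; exact le_of_eq rfl
    have hut : ν (u * t) = ((α + β : ℝ) : WithTop ℝ) := by
      rw [hmul, hα, hβ]; rfl
    rw [hut, hM]
    by_cases hle : r2 * α + (α + α) ≤ α + β
    · exact le_trans (min_le_right _ _) (le_trans hA (by rw [WithTop.coe_le_coe]; exact hle))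
    · push_neg at hle
      have := rl3 hr2sq hr2gt1 hle
      exact le_trans (min_le_left _ _)
        (le_trans hB (by rw [WithTop.coe_le_coe]; linarith))
  -- bound for θ s * s * u
  have bd3 : M ≤ ν (θ s * s * u) := by
    by_cases hs : s = 0
    · rw [hs, map_zero, zero_mul, zero_mul, (hν0 0).mpr rfl]; exact le_top
    by_cases hu : u = 0
    · rw [hu, mul_zero, (hν0 0).mpr rfl]; exact le_top
    obtain ⟨α, hα⟩ := hnetop s hs
    obtain ⟨β, hβ⟩ := hnetop u hu
    have hA : ν (Rnorm θ s t) ≤ ((r2 * α + (α + α) : ℝ) : WithTop ℝ) := by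
      refine le_trans keyA (le_trans (min_le_left _ _) ?_)
      rw [hmul, pow_two, hmul, hinv s hs, hα]; exact le_of_eq rfl
    have hB : ν (Rnorm θ u v) ≤ ((r2 * β + (β + β) : ℝ) : WithTop ℝ) := by
      refine le_trans keyB (le_trans (min_le_left _ _) ?_)
      rw [hmul, pow_two, hmul, hinv u hu, hβ]; exact le_of_eq rfl
    have hμ : ν (θ s * s * u) = ((r2 * α + α + β : ℝ) : WithTop ℝ) := by
      rw [hmul, hmul, hinv s hs, hα, hβ]; rfl
    rw [hμ, hM]
    rcases le_total α β with h | h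
    · refine le_trans (min_le_left _ _) (le_trans hA ?_)
      rw [WithTop.coe_le_coe]; linarith
    · refine le_trans (min_le_right _ _) (le_trans hB ?_)
      rw [WithTop.coe_le_coe]
      nlinarith [mul_le_mul_of_nonneg_left h (by linarith : (0:ℝ) ≤ r2)]
  rw [hiden]
  refine le_trans ?_ (hadd _ _)
  refine le_min (min_le_left _ _) (le_trans ?_ (hadd _ _))
  refine le_min (min_le_right _ _) (le_trans ?_ (hadd _ _))
  refine le_min bd1 (le_trans ?_ (hadd _ _))
  exact le_min bd2 bd3
end
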